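/- Let q be a prime power, f : F_q^k → S any function, and t_d ≤ t_f. Let C be a systematic [n, k] linear code over F_q with minimum distance at least 2t_d+1, with encoding u ↦ c_u (the first k coordinates of c_u equal u), and let u_1, …, u_{q^k} enumerate all vectors of F_q^k. Then N(D_f(t_d, t_f : u_1, …, u_{q^k})) ≤ N(D_{C,f}(t_f : u_1, …, u_{q^k})) + n − k. -/
import Mathlib


/-- The distance requirement matrix `D_f(t_d, t_f : u_1, …, u_M)`. -/
def DRM {F S : Type*} [Fintype F] [DecidableEq F] [DecidableEq S] {k M : ℕ}
    (f : (Fin k → F) → S) (td tf : ℕ) (u : Fin M → Fin k → F) :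
    Fin M → Fin M → ℕ := fun i j =>
  if u i ≠ u j ∧ f (u i) = f (u j) then 2 * td + 1 - hammingDist (u i) (u j)
  else if f (u i) ≠ f (u j) then 2 * tf + 1 - hammingDist (u i) (u j)
  else 0

/-- The coded distance requirement matrix `D_{C,f}(t_f : u_1, …, u_M)`. -/
def CDRM {F S : Type*} [Fintype F] [DecidableEq F] [DecidableEq S] {k n M : ℕ}
    (cenc : (Fin k → F) → (Fin n → F)) (f : (Fin k → F) → S) (tf : ℕ)
    (u : Fin M → Fin k → F) : Fin M → Fin M → ℕ := fun i j =>
  if f (u i) ≠ f (u j) then 2 * tf + 1 - hammingDist (cenc (u i)) (cenc (u j)) else 0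

/-- `N(D)`: the least length `r` for which a `D`-code of length `r` over `F` exists. -/
noncomputable def Nmat (F : Type*) [Fintype F] [DecidableEq F] {M : ℕ}
    (D : Fin M → Fin M → ℕ) : ℕ :=
  sInf {r : ℕ | ∃ p : Fin M → Fin r → F, ∀ i j, D i j ≤ hammingDist (p i) (p j)}

lemma hd_sum {F : Type*} [DecidableEq F] {m : ℕ} (x y : Fin m → F) :
    hammingDist x y = ∑ i, if x i ≠ y i then 1 else 0 := by
  simp [hammingDist, Finset.card_filter]

lemma hd_append {F : Type*} [DecidableEq F] {m l : ℕ} (a c : Fin m → F) (b d : Fin l → F) :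
    hammingDist (Fin.append a b) (Fin.append c d) = hammingDist a c + hammingDist b d := by
  simp [hd_sum, Fin.sum_univ_add, Fin.append_left, Fin.append_right]

lemma hd_cast {F : Type*} [DecidableEq F] {m l : ℕ} (h : m = l) (x y : Fin l → F) :
    hammingDist (fun i => x (Fin.cast h i)) (fun i => y (Fin.cast h i)) = hammingDist x y := by
  subst h; rfl

/-- For a systematic `[n, k]` linear code `C` over `F_q` with minimum distance
at least `2t_d+1`, `N(D_f(t_d,t_f : u_1,…,u_{q^k})) ≤ N(D_{C,f}(t_f : u_1,…,u_{q^k})) + n − k`. -/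
theorem Nmat_DRM_le_Nmat_CDRM_add
    {F S : Type*} [Field F] [Fintype F] [DecidableEq F] [DecidableEq S]
    {k n : ℕ} (hkn : k ≤ n) (f : (Fin k → F) → S) (td tf : ℕ) (htdtf : td ≤ tf)
    (C : (Fin k → F) →ₗ[F] (Fin n → F)) (hCinj : Function.Injective C)
    (hCsys : ∀ (u : Fin k → F) (i : Fin k), C u (Fin.castLE hkn i) = u i)
    (hCdist : ∀ u v : Fin k → F, u ≠ v → 2 * td + 1 ≤ hammingDist (C u) (C v))
    (u : Fin (Fintype.card F ^ k) → (Fin k → F)) (hu : Function.Bijective u) :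
    Nmat F (DRM f td tf u) ≤ Nmat F (CDRM (⇑C) f tf u) + (n - k) := by
  -- parity part of a codeword
  have hadd : k + (n - k) = n := by omega
  set par : (Fin k → F) → Fin (n - k) → F :=
    fun x j => C x ⟨k + j.val, by omega⟩ with hpar
  -- split of the codeword distance
  have hsplit : ∀ x y : Fin k → F,
      hammingDist (C x) (C y) = hammingDist x y + hammingDist (par x) (par y) := by
    intro x y
    have hw : ∀ z : Fin k → F,
        (fun i => C z (Fin.cast hadd i)) = Fin.append z (par z) := by
      intro z
      funext i
      refine Fin.addCases (fun a => ?_) (fun b => ?_) i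
      · rw [Fin.append_left]
        have : Fin.cast hadd (Fin.castAdd (n - k) a) = Fin.castLE hkn a := by
          ext; simp
        rw [this, hCsys]
      · rw [Fin.append_right]
        rfl
    rw [← hd_cast hadd (C x) (C y), hw, hw, hd_append]
  -- the CDRM set is nonempty
  have hne : {r : ℕ | ∃ p : Fin (Fintype.card F ^ k) → Fin r → F,
      ∀ i j, CDRM (⇑C) f tf u i j ≤ hammingDist (p i) (p j)}.Nonempty := by
    refine ⟨k * (2 * tf + 1), fun i j => u i (Fin.divNat j), fun i j => ?_⟩
    simp only [CDRM]
    split_ifs with hf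
    · have huij : u i ≠ u j := fun h => hf (congrArg f h)
      obtain ⟨a, ha⟩ := Function.ne_iff.mp huij
      have hsub : Finset.univ.image (fun b : Fin (2 * tf + 1) => finProdFinEquiv (a, b)) ⊆
          Finset.univ.filter (fun j' : Fin (k * (2 * tf + 1)) =>
            u i (Fin.divNat j') ≠ u j (Fin.divNat j')) := by
        intro x hx
        simp only [Finset.mem_image] at hx
        obtain ⟨b, _, rfl⟩ := hx
        have hdiv : (finProdFinEquiv (a, b) : Fin (k * (2 * tf + 1))).divNat = a := by
          have := finProdFinEquiv.symm_apply_apply (a, b)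
          simpa [finProdFinEquiv] using congrArg Prod.fst this
        simp [hdiv, ha]
      have hcard : 2 * tf + 1 ≤ hammingDist (fun j' : Fin (k * (2 * tf + 1)) => u i (Fin.divNat j'))
          (fun j' : Fin (k * (2 * tf + 1)) => u j (Fin.divNat j')) := by
        calc 2 * tf + 1
            = (Finset.univ.image
                (fun b : Fin (2 * tf + 1) => finProdFinEquiv (a, b))).card := by
              rw [Finset.card_image_of_injective _
                (fun b b' h => by
                  have := finProdFinEquiv.injective h
                  exact (Prod.mk.injEq .. ▸ this).2)]
              simp
          _ ≤ _ := Finset.card_le_card hsub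
      exact le_trans (Nat.sub_le _ _) hcard
    · exact Nat.zero_le _
  -- pick an optimal CDRM-code
  obtain ⟨p, hp⟩ : Nmat F (CDRM (⇑C) f tf u) ∈ {r : ℕ |
      ∃ p : Fin (Fintype.card F ^ k) → Fin r → F,
      ∀ i j, CDRM (⇑C) f tf u i j ≤ hammingDist (p i) (p j)} := Nat.sInf_mem hne
  -- build the extended code
  apply Nat.sInf_le
  refine ⟨fun i => Fin.append (p i) (par (u i)), fun i j => ?_⟩
  rw [hd_append]
  simp only [DRM]
  split_ifs with h1 h2
  · have hd := hCdist _ _ h1.1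
    rw [hsplit] at hd
    omega
  · have h3 := hp i j
    simp only [CDRM, if_pos h2] at h3
    rw [hsplit] at h3
    omega
  · exact Nat.zero_le _
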